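/- Let β > 2 and λ ∈ (0,1). Then β·(λ² + (β−3)·λ^β)/(λ·(2−λ)) ≤ (2·λ^β − β·λ² − 2 + β)/(λ−1)². -/

import Mathlib

open Real Set

/-- If `g` has nonpositive derivative on `(t,1)`, then `g 1 ≤ g t`. -/
private lemma g_one_le_g_t {t : ℝ} (ht : 0 < t) (ht1 : t ≤ 1) {g g' : ℝ → ℝ}
    (hg : ∀ y ∈ Set.Icc t 1, HasDerivAt g (g' y) y)
    (hg' : ∀ y ∈ Set.Ioo t 1, g' y ≤ 0) : g 1 ≤ g t := by
  rcases eq_or_lt_of_le ht1 with rfl | hlt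
  · exact le_rfl
  have hanti : AntitoneOn g (Set.Icc t 1) := by
    apply antitoneOn_of_deriv_nonpos (convex_Icc t 1)
    · exact fun y hy => (hg y hy).continuousAt.continuousWithinAt
    · intro y hy
      rw [interior_Icc] at hy
      exact (hg y ⟨hy.1.le, hy.2.le⟩).differentiableAt.differentiableWithinAt
    · intro y hy
      rw [interior_Icc] at hy
      rw [(hg y ⟨hy.1.le, hy.2.le⟩).deriv]
      exact hg' y hy
  exact hanti ⟨le_rfl, ht1⟩ ⟨ht1, le_rfl⟩ ht1

/-- Quadratic lower bound for `t^b`, `1 ≤ b ≤ 2`, `0 < t ≤ 1`. -/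
private lemma quad_lower {b t : ℝ} (hb1 : 1 ≤ b) (hb2 : b ≤ 2) (ht : 0 < t) (ht1 : t ≤ 1) :
    1 + b * (t - 1) + b * (b - 1) / 2 * (t - 1) ^ 2 ≤ t ^ b := by
  have key := g_one_le_g_t ht ht1
    (g := fun y => y ^ b - (1 + b * (y - 1) + b * (b - 1) / 2 * (y - 1) ^ 2))
    (g' := fun y => b * y ^ (b - 1) - (b * 1 + b * (b - 1) / 2 * (2 * (y - 1) ^ 1 * 1)))
    (fun y hy => by
      have hy0 : 0 < y := lt_of_lt_of_le ht hy.1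
      have h1 : HasDerivAt (fun y : ℝ => y ^ b) (b * y ^ (b - 1)) y :=
        Real.hasDerivAt_rpow_const (Or.inl hy0.ne')
      have h2 : HasDerivAt (fun y : ℝ => y - 1) 1 y := (hasDerivAt_id y).sub_const 1
      have h3 : HasDerivAt (fun y : ℝ => 1 + b * (y - 1) + b * (b - 1) / 2 * (y - 1) ^ 2)
          (b * 1 + b * (b - 1) / 2 * (2 * (y - 1) ^ 1 * 1)) y := by
        have h3' := ((hasDerivAt_const y (1 : ℝ)).add (h2.const_mul b)).add
          ((h2.pow 2).const_mul (b * (b - 1) / 2))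
        refine h3'.congr_deriv ?_
        push_cast
        ring
      exact h1.sub h3)
    (fun y hy => by
      have hy0 : 0 < y := lt_of_lt_of_le ht hy.1.le
      have hber : y ^ (b - 1) ≤ 1 + (b - 1) * (y - 1) := by
        have h := rpow_one_add_le_one_add_mul_self
          (s := y - 1) (by linarith) (p := b - 1) (by linarith) (by linarith)
        have he : (1 : ℝ) + (y - 1) = y := by ring
        rwa [he] at h
      have hb0 : (0 : ℝ) ≤ b := by linarith
      nlinarith [mul_le_mul_of_nonneg_left hber hb0])
  have h1 : (1 : ℝ) ^ b = 1 := Real.one_rpow b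
  simp only [h1] at key
  nlinarith [key]

/-- Quadratic upper bound for `t^b`, `2 ≤ b`, `0 < t ≤ 1`. -/
private lemma quad_upper {b t : ℝ} (hb : 2 ≤ b) (ht : 0 < t) (ht1 : t ≤ 1) :
    t ^ b ≤ 1 + b * (t - 1) + b * (b - 1) / 2 * (t - 1) ^ 2 := by
  have key := g_one_le_g_t ht ht1
    (g := fun y => (1 + b * (y - 1) + b * (b - 1) / 2 * (y - 1) ^ 2) - y ^ b)
    (g' := fun y => (b * 1 + b * (b - 1) / 2 * (2 * (y - 1) ^ 1 * 1)) - b * y ^ (b - 1))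
    (fun y hy => by
      have hy0 : 0 < y := lt_of_lt_of_le ht hy.1
      have h1 : HasDerivAt (fun y : ℝ => y ^ b) (b * y ^ (b - 1)) y :=
        Real.hasDerivAt_rpow_const (Or.inl hy0.ne')
      have h2 : HasDerivAt (fun y : ℝ => y - 1) 1 y := (hasDerivAt_id y).sub_const 1
      have h3 : HasDerivAt (fun y : ℝ => 1 + b * (y - 1) + b * (b - 1) / 2 * (y - 1) ^ 2)
          (b * 1 + b * (b - 1) / 2 * (2 * (y - 1) ^ 1 * 1)) y := by
        have h3' := ((hasDerivAt_const y (1 : ℝ)).add (h2.const_mul b)).add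
          ((h2.pow 2).const_mul (b * (b - 1) / 2))
        refine h3'.congr_deriv ?_
        push_cast
        ring
      exact h3.sub h1)
    (fun y hy => by
      have hy0 : 0 < y := lt_of_lt_of_le ht hy.1.le
      have hber : 1 + (b - 1) * (y - 1) ≤ y ^ (b - 1) := by
        have h := one_add_mul_self_le_rpow_one_add
          (s := y - 1) (by linarith) (p := b - 1) (by linarith)
        have he : (1 : ℝ) + (y - 1) = y := by ring
        rwa [he] at h
      have hb0 : (0 : ℝ) ≤ b := by linarith
      nlinarith [mul_le_mul_of_nonneg_left hber hb0])
  have h1 : (1 : ℝ) ^ b = 1 := Real.one_rpow b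
  simp only [h1] at key
  nlinarith [key]

/-- Cubic lower bound for `t^β`, `3 ≤ β`, `0 < t ≤ 1`. -/
private lemma cubic_lower {β t : ℝ} (hβ : 3 ≤ β) (ht : 0 < t) (ht1 : t ≤ 1) :
    1 + β * (t - 1) + β * (β - 1) / 2 * (t - 1) ^ 2 + β * (β - 1) * (β - 2) / 6 * (t - 1) ^ 3
      ≤ t ^ β := by
  have key := g_one_le_g_t ht ht1
    (g := fun y => y ^ β - (1 + β * (y - 1) + β * (β - 1) / 2 * (y - 1) ^ 2
      + β * (β - 1) * (β - 2) / 6 * (y - 1) ^ 3))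
    (g' := fun y => β * y ^ (β - 1) - (β * 1 + β * (β - 1) / 2 * (2 * (y - 1) ^ 1 * 1)
      + β * (β - 1) * (β - 2) / 6 * (3 * (y - 1) ^ 2 * 1)))
    (fun y hy => by
      have hy0 : 0 < y := lt_of_lt_of_le ht hy.1
      have h1 : HasDerivAt (fun y : ℝ => y ^ β) (β * y ^ (β - 1)) y :=
        Real.hasDerivAt_rpow_const (Or.inl hy0.ne')
      have h2 : HasDerivAt (fun y : ℝ => y - 1) 1 y := (hasDerivAt_id y).sub_const 1
      have h3 : HasDerivAt (fun y : ℝ => 1 + β * (y - 1) + β * (β - 1) / 2 * (y - 1) ^ 2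
          + β * (β - 1) * (β - 2) / 6 * (y - 1) ^ 3)
          (β * 1 + β * (β - 1) / 2 * (2 * (y - 1) ^ 1 * 1)
            + β * (β - 1) * (β - 2) / 6 * (3 * (y - 1) ^ 2 * 1)) y := by
        have h3' := (((hasDerivAt_const y (1 : ℝ)).add (h2.const_mul β)).add
          ((h2.pow 2).const_mul (β * (β - 1) / 2))).add
          ((h2.pow 3).const_mul (β * (β - 1) * (β - 2) / 6))
        refine h3'.congr_deriv ?_
        push_cast
        ring
      exact h1.sub h3)
    (fun y hy => by
      have hy0 : 0 < y := lt_of_lt_of_le ht hy.1.le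
      have hqu : y ^ (β - 1) ≤ 1 + (β - 1) * (y - 1) + (β - 1) * ((β - 1) - 1) / 2 * (y - 1) ^ 2 :=
        quad_upper (by linarith) hy0 hy.2.le
      have hb0 : (0 : ℝ) ≤ β := by linarith
      nlinarith [mul_le_mul_of_nonneg_left hqu hb0])
  have h1 : (1 : ℝ) ^ β = 1 := Real.one_rpow β
  simp only [h1] at key
  nlinarith [key]

/-- Cubic Taylor lower bound for the exponential on `[0, ∞)`. -/
private lemma exp_cubic {u : ℝ} (hu : 0 ≤ u) : 1 + u + u ^ 2 / 2 + u ^ 3 / 6 ≤ Real.exp u := by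
  have h := Real.sum_le_exp_of_nonneg hu 4
  have hs : ∑ i ∈ Finset.range 4, u ^ i / (Nat.factorial i) = 1 + u + u ^ 2 / 2 + u ^ 3 / 6 := by
    simp [Finset.sum_range_succ, Nat.factorial]
    try ring
  rw [hs] at h
  exact h

/-- Key exponential estimate: for `u ≥ 0` with `u² ≥ 2`, `u² e^{-u} ≤ 2(u-1)`. -/
private lemma exp_key {u : ℝ} (hu0 : 0 ≤ u) (hu2 : 2 ≤ u ^ 2) :
    u ^ 2 * Real.exp (-u) ≤ 2 * (u - 1) := by
  have hu1 : 1 ≤ u := by nlinarith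
  have hpoly : (0 : ℝ) < 1 + u + u ^ 2 / 2 + u ^ 3 / 6 := by positivity
  have hE : (0 : ℝ) < Real.exp (-u) := Real.exp_pos _
  have hEprod : Real.exp (-u) * (1 + u + u ^ 2 / 2 + u ^ 3 / 6) ≤ 1 := by
    have h := mul_le_mul_of_nonneg_left (exp_cubic hu0) hE.le
    rwa [← Real.exp_add, neg_add_cancel, Real.exp_zero] at h
  have h6 : u ^ 2 ≤ 2 * (u - 1) * (1 + u + u ^ 2 / 2 + u ^ 3 / 6) := by
    nlinarith [mul_le_mul_of_nonneg_left hu2 hu0, mul_le_mul_of_nonneg_left hu2 (sq_nonneg u),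
      sq_nonneg (u - 1), sq_nonneg u]
  have h7 := mul_le_mul_of_nonneg_left hEprod (sq_nonneg u)
  have hfin : (u ^ 2 * Real.exp (-u)) * (1 + u + u ^ 2 / 2 + u ^ 3 / 6)
      ≤ (2 * (u - 1)) * (1 + u + u ^ 2 / 2 + u ^ 3 / 6) := by nlinarith [h7, h6]
  exact le_of_mul_le_mul_right hfin hpoly

set_option maxHeartbeats 1000000 in
/-- Elementary inequality for `β > 2` and `λ ∈ (0,1)`:
`β(λ² + (β−3)λ^β)/(λ(2−λ)) ≤ (2λ^β − βλ² − 2 + β)/(λ−1)²`. -/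
theorem key_elementary_inequality (β lam : ℝ) (hβ : 2 < β) (hlam : lam ∈ Set.Ioo (0 : ℝ) 1) :
    β * (lam ^ 2 + (β - 3) * lam ^ β) / (lam * (2 - lam))
      ≤ (2 * lam ^ β - β * lam ^ 2 - 2 + β) / (lam - 1) ^ 2 := by
  obtain ⟨hl0, hl1⟩ := hlam
  have hd1 : 0 < lam * (2 - lam) := by nlinarith
  have hd2 : 0 < (lam - 1) ^ 2 := by
    have : lam - 1 ≠ 0 := sub_ne_zero.mpr (ne_of_lt hl1)
    positivity
  rw [div_le_div_iff₀ hd1 hd2]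
  have hsplit : lam ^ β = lam ^ (β - 1) * lam := by
    have he : β - 1 + 1 = β := by ring
    have h := Real.rpow_add_one hl0.ne' (β - 1)
    rwa [he] at h
  rcases le_or_gt β 3 with hβ3 | hβ3
  · -- Case 2 < β ≤ 3
    rw [hsplit]
    have hQ : 1 + (β - 1) * (lam - 1) + (β - 1) * ((β - 1) - 1) / 2 * (lam - 1) ^ 2
        ≤ lam ^ (β - 1) := quad_lower (by linarith) (by linarith) hl0 hl1.le
    have hc : 0 ≤ 2 - (β - 1) * (β - 2) * (1 - lam) ^ 2 := by
      nlinarith [sq_nonneg (1 - lam), mul_nonneg (sub_nonneg.mpr hβ.le) (sq_nonneg (1 - lam))]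
    have hprod : 0 ≤ (2 - (β - 1) * (β - 2) * (1 - lam) ^ 2) *
        (lam * (lam ^ (β - 1) -
          (1 + (β - 1) * (lam - 1) + (β - 1) * ((β - 1) - 1) / 2 * (lam - 1) ^ 2))) :=
      mul_nonneg hc (mul_nonneg hl0.le (by linarith))
    have hkey : 0 ≤ lam * ((β - 1) ^ 2 * (β - 2)) * (1 - lam) ^ 3 * (2 - (β - 2) * (1 - lam)) := by
      have h1 : 0 ≤ lam * ((β - 1) ^ 2 * (β - 2)) * (1 - lam) ^ 3 := by
        have : (0:ℝ) ≤ β - 2 := by linarith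
        have : (0:ℝ) ≤ 1 - lam := by linarith
        positivity
      have h2 : 0 ≤ 2 - (β - 2) * (1 - lam) := by nlinarith
      exact mul_nonneg h1 h2
    linarith [hprod, hkey]
  · -- Case β > 3
    rcases le_or_gt 2 ((β - 1) * (β - 2) * (1 - lam) ^ 2) with hc | hc
    · -- c ≤ 0 : use exponential upper bound
      have hu0 : 0 ≤ (β - 1) * (1 - lam) := by nlinarith
      have hu2 : 2 ≤ ((β - 1) * (1 - lam)) ^ 2 := by nlinarith [sq_nonneg (1 - lam)]
      have hek := exp_key hu0 hu2
      have hy : lam ^ (β - 1) ≤ Real.exp (-((β - 1) * (1 - lam))) := by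
        rw [Real.rpow_def_of_pos hl0]
        apply Real.exp_le_exp.mpr
        have hlog : Real.log lam ≤ lam - 1 := Real.log_le_sub_one_of_pos hl0
        nlinarith [mul_le_mul_of_nonneg_left hlog (by linarith : (0:ℝ) ≤ β - 1)]
      have hxub : lam ^ β ≤ lam * Real.exp (-((β - 1) * (1 - lam))) := by
        rw [hsplit]
        nlinarith [mul_le_mul_of_nonneg_right hy hl0.le]
      have hcneg : 2 - (β - 1) * (β - 2) * (1 - lam) ^ 2 ≤ 0 := by linarith
      have hi1 : (2 - (β - 1) * (β - 2) * (1 - lam) ^ 2) *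
          (lam * Real.exp (-((β - 1) * (1 - lam)))) ≤
          (2 - (β - 1) * (β - 2) * (1 - lam) ^ 2) * (lam ^ β) :=
        mul_le_mul_of_nonpos_left hxub hcneg
      have hi2 : 0 ≤ lam * (2 * ((β - 1) * (1 - lam) - 1) -
          ((β - 1) * (1 - lam)) ^ 2 * Real.exp (-((β - 1) * (1 - lam)))) :=
        mul_nonneg hl0.le (by linarith)
      have hi3 : 0 ≤ ((2 - (β - 1) * (β - 2) * (1 - lam) ^ 2) + ((β - 1) * (1 - lam)) ^ 2) *
          (lam * Real.exp (-((β - 1) * (1 - lam)))) := by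
        apply mul_nonneg
        · nlinarith [mul_nonneg (mul_nonneg (by linarith : (0:ℝ) ≤ β - 1)
            (by linarith : (0:ℝ) ≤ 1)) (sq_nonneg (1 - lam)), sq_nonneg (1 - lam)]
        · exact mul_nonneg hl0.le (Real.exp_pos _).le
      linarith [hi1, hi2, hi3]
    · -- c ≥ 0 : use cubic Taylor lower bound
      have hL : 1 + β * (lam - 1) + β * (β - 1) / 2 * (lam - 1) ^ 2
          + β * (β - 1) * (β - 2) / 6 * (lam - 1) ^ 3 ≤ lam ^ β :=
        cubic_lower (by linarith) hl0 hl1.le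
      have hcpos : 0 ≤ 2 - (β - 1) * (β - 2) * (1 - lam) ^ 2 := by linarith
      have hprod : 0 ≤ (2 - (β - 1) * (β - 2) * (1 - lam) ^ 2) *
          (lam ^ β - (1 + β * (lam - 1) + β * (β - 1) / 2 * (lam - 1) ^ 2
            + β * (β - 1) * (β - 2) / 6 * (lam - 1) ^ 3)) :=
        mul_nonneg hcpos (by linarith)
      have hN : 0 ≤ (β - 1) * (β - 2) * (1 - lam) ^ 2 - 3 * (β - 1) * (1 - lam) + 4 := by
        nlinarith [sq_nonneg (2 * (1 - lam) ^ 2 * (β - 1) - (1 - lam) ^ 2 - 3 * (1 - lam)),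
          mul_nonneg (mul_nonneg (sq_nonneg (1 - lam)) (by linarith : (0:ℝ) ≤ (1 - lam) + 7))
            (by linarith : (0:ℝ) ≤ 1 - (1 - lam)), sq_nonneg (1 - lam), hl0.le, hl1.le]
      have hkey : 0 ≤ (1 - lam) ^ 3 * (β * (β - 1) * (β - 2)) *
          ((β - 1) * (β - 2) * (1 - lam) ^ 2 - 3 * (β - 1) * (1 - lam) + 4) := by
        apply mul_nonneg _ hN
        have h1 : (0:ℝ) ≤ (1 - lam) ^ 3 := pow_nonneg (by linarith) 3
        have h2 : (0:ℝ) ≤ β * (β - 1) * (β - 2) :=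
          mul_nonneg (mul_nonneg (by linarith) (by linarith)) (by linarith)
        exact mul_nonneg h1 h2
      linarith [hprod, hkey]
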